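/- Let m ≥ 2 and n ≥ 1. For v ∈ (ZMod m)^n define the Lee-based chain weight w(v) = 0 if v = 0, and w(v) = w_L(v_t) + (t-1)·⌊m/2⌋ where t is the largest index with v_t ≠ 0. Then w(u - v) defines a metric on (ZMod m)^n, i.e., w(v) = 0 iff v = 0, w(-v) = w(v), and w(u+v) ≤ w(u) + w(v). -/
import Mathlib

/-- The Lee weight on `ZMod m`. -/
def leeWeight (m : ℕ) (x : ZMod m) : ℕ := min x.val (m - x.val)

/-- The chain (NRT-type) pomset weight on `(ZMod m)^n`: the Lee weight of the
top nonzero coordinate plus `⌊m/2⌋` for each coordinate below it. -/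
noncomputable def chainWeight (m n : ℕ) (v : Fin n → ZMod m) : ℕ :=
  if h : v = 0 then 0
  else
    let t : Fin n := (Finset.univ.filter fun i => v i ≠ 0).max' (by
      rw [Finset.filter_nonempty_iff]
      obtain ⟨i, hi⟩ := Function.ne_iff.mp h
      exact ⟨i, Finset.mem_univ i, by simpa using hi⟩)
    leeWeight m (v t) + t.val * (m / 2)

section aux

variable {m n : ℕ}

lemma lee_le (hm : 2 ≤ m) (x : ZMod m) : leeWeight m x ≤ m / 2 := by
  haveI : NeZero m := ⟨by omega⟩
  have := ZMod.val_lt x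
  unfold leeWeight
  omega

lemma lee_pos (hm : 2 ≤ m) {x : ZMod m} (hx : x ≠ 0) : 1 ≤ leeWeight m x := by
  haveI : NeZero m := ⟨by omega⟩
  have h1 := ZMod.val_lt x
  have h2 : x.val ≠ 0 := fun h => hx ((ZMod.val_eq_zero x).mp h)
  unfold leeWeight
  omega

lemma lee_neg (hm : 2 ≤ m) (x : ZMod m) : leeWeight m (-x) = leeWeight m x := by
  haveI : NeZero m := ⟨by omega⟩
  have h1 := ZMod.val_lt x
  unfold leeWeight
  rw [ZMod.neg_val]
  split
  · next h => subst h; simp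
  · next h =>
    have h2 : x.val ≠ 0 := fun h' => h ((ZMod.val_eq_zero x).mp h')
    omega

lemma lee_add (hm : 2 ≤ m) (x y : ZMod m) :
    leeWeight m (x + y) ≤ leeWeight m x + leeWeight m y := by
  haveI : NeZero m := ⟨by omega⟩
  have h1 := ZMod.val_lt x
  have h2 := ZMod.val_lt y
  unfold leeWeight
  rw [ZMod.val_add]
  rcases lt_or_ge (x.val + y.val) m with h | h
  · rw [Nat.mod_eq_of_lt h]; omega
  · have : (x.val + y.val) % m = x.val + y.val - m := by
      rw [Nat.mod_eq_sub_mod h, Nat.mod_eq_of_lt (by omega)]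
    rw [this]; omega

noncomputable def topIdx (v : Fin n → ZMod m) (h : v ≠ 0) : Fin n :=
  (Finset.univ.filter fun i => v i ≠ 0).max' (by
    rw [Finset.filter_nonempty_iff]
    obtain ⟨i, hi⟩ := Function.ne_iff.mp h
    exact ⟨i, Finset.mem_univ i, by simpa using hi⟩)

lemma chainWeight_eq (v : Fin n → ZMod m) (h : v ≠ 0) :
    chainWeight m n v = leeWeight m (v (topIdx v h)) + (topIdx v h).val * (m / 2) := by
  rw [chainWeight, dif_neg h]; rfl

lemma top_ne_zero (v : Fin n → ZMod m) (h : v ≠ 0) : v (topIdx v h) ≠ 0 := by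
  have := Finset.max'_mem (Finset.univ.filter fun i => v i ≠ 0) (by
    rw [Finset.filter_nonempty_iff]
    obtain ⟨i, hi⟩ := Function.ne_iff.mp h
    exact ⟨i, Finset.mem_univ i, by simpa using hi⟩)
  simpa [topIdx] using (Finset.mem_filter.mp this).2

lemma le_topIdx (v : Fin n → ZMod m) (h : v ≠ 0) {i : Fin n} (hi : v i ≠ 0) :
    i ≤ topIdx v h :=
  Finset.le_max' _ i (Finset.mem_filter.mpr ⟨Finset.mem_univ i, hi⟩)

lemma key (hm : 2 ≤ m) (v : Fin n → ZMod m) {i : Fin n} (hi : v i ≠ 0) :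
    leeWeight m (v i) + i.val * (m / 2) ≤ chainWeight m n v := by
  have hv : v ≠ 0 := fun h => hi (by rw [h]; rfl)
  rw [chainWeight_eq v hv]
  set t := topIdx v hv with ht
  have hit : i ≤ t := le_topIdx v hv hi
  rcases eq_or_lt_of_le hit with heq | hlt
  · rw [heq]
  · have h1 : leeWeight m (v i) ≤ m / 2 := lee_le hm _
    have h2 : 1 ≤ leeWeight m (v t) := lee_pos hm (top_ne_zero v hv)
    have h3 : i.val + 1 ≤ t.val := hlt
    calc leeWeight m (v i) + i.val * (m / 2) ≤ (i.val + 1) * (m / 2) := by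
          rw [add_mul, one_mul]; omega
      _ ≤ t.val * (m / 2) := Nat.mul_le_mul_right _ h3
      _ ≤ _ := Nat.le_add_left _ _

end aux

theorem chainWeight_metric (m n : ℕ) (hm : 2 ≤ m) (hn : 1 ≤ n) :
    (∀ v : Fin n → ZMod m, chainWeight m n v = 0 ↔ v = 0) ∧
      (∀ v : Fin n → ZMod m, chainWeight m n (-v) = chainWeight m n v) ∧
      (∀ u v : Fin n → ZMod m,
        chainWeight m n (u + v) ≤ chainWeight m n u + chainWeight m n v) := by
  refine ⟨?_, ?_, ?_⟩
  · intro v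
    constructor
    · intro h
      by_contra hv
      rw [chainWeight_eq v hv] at h
      have := lee_pos hm (top_ne_zero v hv)
      omega
    · intro h; rw [chainWeight, dif_pos h]
  · intro v
    by_cases hv : v = 0
    · rw [hv]; simp
    · have hnv : -v ≠ 0 := fun h => hv (by simpa using neg_eq_zero.mp h)
      rw [chainWeight_eq v hv, chainWeight_eq (-v) hnv]
      have hset : topIdx (-v) hnv = topIdx v hv := by
        unfold topIdx
        congr 1
        ext i
        simp
      rw [hset]
      simp only [Pi.neg_apply, lee_neg hm]
  · intro u v
    by_cases h : u + v = 0
    · rw [h, chainWeight, dif_pos rfl]; exact Nat.zero_le _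
    · rw [chainWeight_eq _ h]
      set t := topIdx (u + v) h with ht
      have hsum : u t + v t ≠ 0 := top_ne_zero (u + v) h
      have hlee : leeWeight m ((u + v) t) ≤ leeWeight m (u t) + leeWeight m (v t) :=
        lee_add hm (u t) (v t)
      by_cases hu : u t = 0
      · have hvt : v t ≠ 0 := fun hv' => hsum (by rw [hu, hv', add_zero])
        have h1 : leeWeight m (v t) + t.val * (m / 2) ≤ chainWeight m n v :=
          key hm v hvt
        have h2 : leeWeight m (u t) = 0 := by
          haveI : NeZero m := ⟨by omega⟩
          simp [hu, leeWeight]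
        omega
      · have h1 : leeWeight m (u t) + t.val * (m / 2) ≤ chainWeight m n u :=
          key hm u hu
        have h2 : leeWeight m (v t) ≤ chainWeight m n v := by
          by_cases hvt : v t = 0
          · haveI : NeZero m := ⟨by omega⟩
            simp [hvt, leeWeight]
          · have := key hm v hvt
            omega
        omega
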